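/- Let K be a field, m ≥ 1, σ = σ1 + σ2 with σ1, σ2 ≥ 1, let J ∈ K^{σ×σ} be block upper triangular J = [[J1, J'],[0, J2]] with J1 ∈ K^{σ1×σ1}, J2 ∈ K^{σ2×σ2}, let E ∈ K^{m×σ}, let E1 be its first σ1 columns, and let s ∈ ℤ^m. Suppose P1 ∈ K[X]^{m×m} is an interpolation basis for (E1,J1) in s-Popov form with column degree δ1, let E2 be the last σ2 columns of P1·E, and suppose P2 ∈ K[X]^{m×m} is an interpolation basis for (E2,J2) in (s+δ1)-Popov form with column degree δ2. Then any interpolation basis for (E,J) which is in s-Popov form has column degree δ1 + δ2. -/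

import Mathlib

open Polynomial Matrix

/-- Degree of a polynomial as an element of `WithBot ℤ`, with `degZ 0 = ⊥`. -/
noncomputable def degZ {K : Type*} [Field K] (p : Polynomial K) : WithBot ℤ :=
  p.degree.map (fun n : ℕ => (n : ℤ))

/-- The `s`-degree of a row vector `p`: `max_j (deg p_j + s_j)`. -/
noncomputable def sdeg {K : Type*} [Field K] {ι : Type*} [Fintype ι]
    (s : ι → ℤ) (p : ι → Polynomial K) : WithBot ℤ :=
  Finset.univ.sup fun j => degZ (p j) + (s j : WithBot ℤ)

/-- `j` is the `s`-pivot index of the row `p`: the largest index at which the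
`s`-degree of `p` is attained. -/
def IsPivotIndex {K : Type*} [Field K] {ι : Type*} [Fintype ι] [LinearOrder ι]
    (s : ι → ℤ) (p : ι → Polynomial K) (j : ι) : Prop :=
  degZ (p j) + (s j : WithBot ℤ) = sdeg s p ∧
    ∀ k, j < k → degZ (p k) + (s k : WithBot ℤ) ≠ sdeg s p

/-- `P` is in `s`-Popov form: it is nonsingular, the `s`-pivot entries are monic and
on the diagonal, and in each column the nonpivot entries have degree less than
the pivot entry. -/
def IsPopov {K : Type*} [Field K] {m : ℕ} (s : Fin m → ℤ)
    (P : Matrix (Fin m) (Fin m) (Polynomial K)) : Prop :=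
  P.det ≠ 0 ∧ (∀ i, IsPivotIndex s (P i) i) ∧ (∀ i, (P i i).Monic) ∧
    ∀ i j, i ≠ j → (P i j).degree < (P j j).degree

/-- `p` is an interpolant for `(E, J)`: `∑ i, (row i of E) ⋅ (p i)(J) = 0`. -/
def IsInterpolant {K : Type*} [Field K] {ι n : Type*} [Fintype ι] [Fintype n] [DecidableEq n]
    (E : Matrix ι n K) (J : Matrix n n K) (p : ι → Polynomial K) : Prop :=
  ∑ i, Matrix.vecMul (E i) (Polynomial.aeval J (p i)) = 0

/-- `P` is an interpolation basis for `(E, J)`: its rows form a basis of the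
`K[X]`-module of interpolants for `(E, J)`. -/
def IsInterpolationBasis {K : Type*} [Field K] {ι n : Type*} [Fintype ι] [Fintype n]
    [DecidableEq n] (E : Matrix ι n K) (J : Matrix n n K)
    (P : Matrix ι ι (Polynomial K)) : Prop :=
  LinearIndependent (Polynomial K) (fun i => P i) ∧
    (Submodule.span (Polynomial K) (Set.range fun i => P i) : Set (ι → Polynomial K))
      = {p | IsInterpolant E J p}

/-- The product `Q ⋅ E`: the matrix over `K` whose `i`-th row is `∑ j, (E j) ⋅ (Q i j)(J)`. -/
noncomputable def polMulMat {K : Type*} [Field K] {κ ι n : Type*} [Fintype κ] [Fintype ι]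
    [Fintype n] [DecidableEq n]
    (Q : Matrix κ ι (Polynomial K)) (E : Matrix ι n K) (J : Matrix n n K) : Matrix κ n K :=
  fun i => ∑ j, Matrix.vecMul (E j) (Polynomial.aeval J (Q i j))

/-- The `s`-leading matrix of `R`: if row `i` has `s`-degree `d`, its `(i,j)` entry is
the coefficient of degree `d - s j` in `R i j` (and `0` if row `i` is zero). -/
noncomputable def leadingMatrix {K : Type*} [Field K] {ι : Type*} [Fintype ι]
    (s : ι → ℤ) (R : Matrix ι ι (Polynomial K)) : Matrix ι ι K := fun i j =>
  WithBot.recBotCoe 0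
    (fun d => if 0 ≤ d - s j then (R i j).coeff (d - s j).toNat else 0)
    (sdeg s (R i))

section AuxDegZ

variable {K : Type*} [Field K]

lemma degZ_eq_bot' {p : Polynomial K} : degZ p = ⊥ ↔ p = 0 := by
  simp [degZ, Polynomial.degree_eq_bot]

lemma degZ_zero : degZ (0 : Polynomial K) = ⊥ := by simp [degZ]

lemma degZ_le_degZ {p q : Polynomial K} (h : p.degree ≤ q.degree) : degZ p ≤ degZ q := by
  unfold degZ
  rcases hp : p.degree with _ | n
  · simp [WithBot.none_eq_bot]
  · rcases hq : q.degree with _ | k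
    · rw [hp, hq] at h; exact absurd h (WithBot.not_coe_le_bot n)
    · rw [hp, hq] at h
      simp only [WithBot.some_eq_coe, WithBot.coe_le_coe] at h
      simp only [WithBot.some_eq_coe, WithBot.map_coe, WithBot.coe_le_coe]
      exact_mod_cast h

lemma degZ_mul {p q : Polynomial K} : degZ (p * q) = degZ p + degZ q := by
  unfold degZ
  rw [Polynomial.degree_mul]
  rcases hp : p.degree with _ | n
  · simp [WithBot.none_eq_bot]
  · rcases hq : q.degree with _ | k
    · simp [WithBot.none_eq_bot, WithBot.some_eq_coe]
    · simp only [WithBot.some_eq_coe, ← WithBot.coe_add, WithBot.map_coe]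
      norm_cast

lemma degZ_eq_natDegree {p : Polynomial K} (h : p ≠ 0) :
    degZ p = ((p.natDegree : ℤ) : WithBot ℤ) := by
  unfold degZ
  rw [Polynomial.degree_eq_natDegree h]
  rfl

lemma degZ_add_le (p q : Polynomial K) : degZ (p + q) ≤ max (degZ p) (degZ q) := by
  rcases le_or_gt p.degree q.degree with h | h
  · exact le_trans (degZ_le_degZ (le_trans (Polynomial.degree_add_le p q) (by simp [h])))
      (le_max_right _ _)
  · exact le_trans (degZ_le_degZ (le_trans (Polynomial.degree_add_le p q) (by simp [h.le])))
      (le_max_left _ _)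

lemma degZ_add_eq_left {p q : Polynomial K} (h : degZ q < degZ p) : degZ (p + q) = degZ p := by
  have hd : q.degree < p.degree := by
    by_contra hc
    exact absurd (degZ_le_degZ (not_lt.mp hc)) (not_le_of_gt h)
  unfold degZ
  rw [Polynomial.degree_add_eq_left_of_degree_lt hd]

lemma degZ_nonneg {p : Polynomial K} (h : p ≠ 0) : (0 : WithBot ℤ) ≤ degZ p := by
  rw [degZ_eq_natDegree h]
  exact_mod_cast Int.ofNat_nonneg _

lemma wb_le_cancel {a b : WithBot ℤ} {c : ℤ} (h : a + (c : WithBot ℤ) ≤ b + (c : WithBot ℤ)) :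
    a ≤ b := (WithBot.add_le_add_iff_right (by simp : ((c : WithBot ℤ)) ≠ ⊥)).mp h

lemma degZ_sum_le_of {α : Type*} (t : Finset α) (f : α → Polynomial K) (c : ℤ) (D : WithBot ℤ)
    (h : ∀ j ∈ t, degZ (f j) + (c : WithBot ℤ) ≤ D) :
    degZ (∑ j ∈ t, f j) + (c : WithBot ℤ) ≤ D := by
  classical
  induction t using Finset.cons_induction with
  | empty => simp [degZ_zero]
  | cons a t ha ih =>
    rw [Finset.sum_cons]
    have h1 := h a (Finset.mem_cons_self a t)
    have h2 := ih (fun j hj => h j (Finset.mem_cons_of_mem hj))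
    calc degZ (f a + ∑ j ∈ t, f j) + (c : WithBot ℤ)
        ≤ max (degZ (f a)) (degZ (∑ j ∈ t, f j)) + (c : WithBot ℤ) :=
          add_le_add_left (degZ_add_le _ _) _
      _ = max (degZ (f a) + (c : WithBot ℤ)) (degZ (∑ j ∈ t, f j) + (c : WithBot ℤ)) :=
          (max_add_add_right _ _ _).symm
      _ ≤ D := max_le h1 h2

lemma degZ_sum_lt_of {α : Type*} (t : Finset α) (f : α → Polynomial K) (c : ℤ) (D : WithBot ℤ)
    (hD : ⊥ < D)
    (h : ∀ j ∈ t, degZ (f j) + (c : WithBot ℤ) < D) :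
    degZ (∑ j ∈ t, f j) + (c : WithBot ℤ) < D := by
  classical
  induction t using Finset.cons_induction with
  | empty => simpa [degZ_zero] using hD
  | cons a t ha ih =>
    rw [Finset.sum_cons]
    have h1 := h a (Finset.mem_cons_self a t)
    have h2 := ih (fun j hj => h j (Finset.mem_cons_of_mem hj))
    calc degZ (f a + ∑ j ∈ t, f j) + (c : WithBot ℤ)
        ≤ max (degZ (f a)) (degZ (∑ j ∈ t, f j)) + (c : WithBot ℤ) :=
          add_le_add_left (degZ_add_le _ _) _
      _ = max (degZ (f a) + (c : WithBot ℤ)) (degZ (∑ j ∈ t, f j) + (c : WithBot ℤ)) :=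
          (max_add_add_right _ _ _).symm
      _ < D := max_lt h1 h2

lemma degZ_sum_eq {α : Type*} [DecidableEq α] (t : Finset α) (f : α → Polynomial K) (c : ℤ)
    (D : WithBot ℤ) (hD : ⊥ < D) (a : α) (ha : a ∈ t)
    (hA : degZ (f a) + (c : WithBot ℤ) = D)
    (h : ∀ j ∈ t, j ≠ a → degZ (f j) + (c : WithBot ℤ) < D) :
    degZ (∑ j ∈ t, f j) + (c : WithBot ℤ) = D := by
  rw [← Finset.add_sum_erase t f ha]
  have hlt : degZ (∑ j ∈ t.erase a, f j) + (c : WithBot ℤ) < D :=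
    degZ_sum_lt_of _ _ _ _ hD (fun j hj =>
      h j (Finset.mem_of_mem_erase hj) (Finset.ne_of_mem_erase hj))
  have hlt2 : degZ (∑ j ∈ t.erase a, f j) < degZ (f a) := by
    by_contra hc
    have h2 : degZ (f a) + (c : WithBot ℤ) ≤ degZ (∑ j ∈ t.erase a, f j) + (c : WithBot ℤ) :=
      add_le_add_left (not_lt.mp hc) _
    rw [hA] at h2
    exact absurd hlt (not_lt_of_ge h2)
  rw [degZ_add_eq_left hlt2, hA]

lemma key_lemma {m : ℕ} (s : Fin m → ℤ) (d : Fin m → ℕ)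
    (R : Matrix (Fin m) (Fin m) (Polynomial K))
    (hR1 : ∀ j, degZ (R j j) = ((d j : ℤ) : WithBot ℤ))
    (hR2 : ∀ j k, degZ (R j k) + ((s k : ℤ) : WithBot ℤ)
      ≤ ((d j : ℤ) : WithBot ℤ) + ((s j : ℤ) : WithBot ℤ))
    (hR3 : ∀ j k, j < k → degZ (R j k) + ((s k : ℤ) : WithBot ℤ)
      < ((d j : ℤ) : WithBot ℤ) + ((s j : ℤ) : WithBot ℤ))
    (u : Fin m → Polynomial K) (p : Fin m → Polynomial K)
    (hp : ∀ k, p k = ∑ j, u j * R j k) (i : Fin m)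
    (hpi : p i ≠ 0)
    (hle : ∀ k, degZ (p k) + ((s k : ℤ) : WithBot ℤ) ≤ degZ (p i) + ((s i : ℤ) : WithBot ℤ))
    (hlt : ∀ k, i < k →
      degZ (p k) + ((s k : ℤ) : WithBot ℤ) < degZ (p i) + ((s i : ℤ) : WithBot ℤ)) :
    ((d i : ℤ) : WithBot ℤ) ≤ degZ (p i) := by
  classical
  set g : Fin m → WithBot ℤ :=
    fun j => degZ (u j) + (((d j : ℤ) : WithBot ℤ) + ((s j : ℤ) : WithBot ℤ)) with hg
  set D : WithBot ℤ := Finset.univ.sup g with hDdef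
  have huex : ∃ j, u j ≠ 0 := by
    by_contra hc
    push_neg at hc
    refine hpi ?_
    rw [hp i]
    simp [hc]
  obtain ⟨j0, hj0⟩ := huex
  have hgj0 : g j0 ≠ ⊥ := by
    rw [hg]
    simp only
    rw [degZ_eq_natDegree hj0, ← WithBot.coe_add, ← WithBot.coe_add]
    exact WithBot.coe_ne_bot
  have hDbot : ⊥ < D :=
    lt_of_lt_of_le (Ne.bot_lt hgj0) (Finset.le_sup (Finset.mem_univ j0))
  set A : Finset (Fin m) := Finset.univ.filter (fun j => g j = D) with hA
  have hAne : A.Nonempty := by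
    obtain ⟨b, _, hb⟩ := Finset.exists_mem_eq_sup Finset.univ
      ⟨i, Finset.mem_univ i⟩ g
    exact ⟨b, by simp [hA, hb.symm, hDdef]⟩
  set js : Fin m := A.max' hAne with hjs
  have hjsA : js ∈ A := A.max'_mem hAne
  have hgjs : g js = D := (Finset.mem_filter.mp hjsA).2
  have hmax : ∀ j, js < j → g j < D := by
    intro j hj
    have hne : g j ≠ D := by
      intro hEq
      have : j ∈ A := Finset.mem_filter.mpr ⟨Finset.mem_univ j, hEq⟩
      exact absurd (A.le_max' j this) (not_le_of_gt hj)
    exact lt_of_le_of_ne (Finset.le_sup (Finset.mem_univ j)) hne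
  have term_le : ∀ j k : Fin m, degZ (u j * R j k) + ((s k : ℤ) : WithBot ℤ) ≤ g j := by
    intro j k
    calc degZ (u j * R j k) + ((s k : ℤ) : WithBot ℤ)
        = degZ (u j) + (degZ (R j k) + ((s k : ℤ) : WithBot ℤ)) := by rw [degZ_mul, add_assoc]
      _ ≤ degZ (u j) + (((d j : ℤ) : WithBot ℤ) + ((s j : ℤ) : WithBot ℤ)) :=
          add_le_add_right (hR2 j k) _
      _ = g j := rfl
  have term_lt : ∀ j k : Fin m, j < k → degZ (u j * R j k) + ((s k : ℤ) : WithBot ℤ) < D := by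
    intro j k hjk
    rcases eq_or_ne (u j) 0 with h0 | h0
    · rw [h0, zero_mul, degZ_zero, WithBot.bot_add]
      exact hDbot
    · calc degZ (u j * R j k) + ((s k : ℤ) : WithBot ℤ)
          = degZ (u j) + (degZ (R j k) + ((s k : ℤ) : WithBot ℤ)) := by rw [degZ_mul, add_assoc]
        _ < degZ (u j) + (((d j : ℤ) : WithBot ℤ) + ((s j : ℤ) : WithBot ℤ)) :=
            WithBot.add_lt_add_left (by rw [degZ_eq_natDegree h0]; exact WithBot.coe_ne_bot)
              (hR3 j k hjk)
        _ = g j := rfl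
        _ ≤ D := Finset.le_sup (Finset.mem_univ j)
  have bound_le : ∀ k, degZ (p k) + ((s k : ℤ) : WithBot ℤ) ≤ D := by
    intro k
    rw [hp k]
    exact degZ_sum_le_of _ _ _ _ (fun j _ =>
      le_trans (term_le j k) (Finset.le_sup (Finset.mem_univ j)))
  have bound_lt : ∀ k, js < k → degZ (p k) + ((s k : ℤ) : WithBot ℤ) < D := by
    intro k hk
    rw [hp k]
    refine degZ_sum_lt_of _ _ _ _ hDbot (fun j _ => ?_)
    rcases lt_or_ge j k with hjk | hjk
    · exact term_lt j k hjk
    · exact lt_of_le_of_lt (term_le j k) (hmax j (lt_of_lt_of_le hk hjk))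
  have attain : degZ (p js) + ((s js : ℤ) : WithBot ℤ) = D := by
    rw [hp js]
    refine degZ_sum_eq _ _ _ _ hDbot js (Finset.mem_univ js) ?_ ?_
    · rw [degZ_mul, hR1 js, add_assoc]
      exact hgjs
    · intro j _ hjne
      rcases lt_or_gt_of_ne hjne with hjlt | hjgt
      · exact term_lt j js hjlt
      · exact lt_of_le_of_lt (term_le j js) (hmax j hjgt)
  rcases lt_trichotomy i js with hij | hij | hij
  · exact absurd (lt_of_lt_of_le (hlt js hij) (bound_le i))
      (by rw [attain]; exact lt_irrefl D)
  · have hD_eq : degZ (p i) + ((s i : ℤ) : WithBot ℤ) = D := by rw [hij]; exact attain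
    have hui : u i ≠ 0 := by
      intro h0
      have hgb : g i = ⊥ := by rw [hg]; simp [h0, degZ_zero]
      rw [hij] at hgb
      rw [hgb] at hgjs
      exact absurd hgjs.symm (ne_of_gt hDbot)
    have hgi : g i = D := by rw [hij]; exact hgjs
    have hfin : ((d i : ℤ) : WithBot ℤ) + ((s i : ℤ) : WithBot ℤ) ≤ g i := by
      rw [hg]
      simp only
      calc ((d i : ℤ) : WithBot ℤ) + ((s i : ℤ) : WithBot ℤ)
          = 0 + (((d i : ℤ) : WithBot ℤ) + ((s i : ℤ) : WithBot ℤ)) := by rw [zero_add]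
        _ ≤ degZ (u i) + (((d i : ℤ) : WithBot ℤ) + ((s i : ℤ) : WithBot ℤ)) :=
            add_le_add_left (degZ_nonneg hui) _
    rw [hgi, ← hD_eq] at hfin
    exact wb_le_cancel hfin
  · exact absurd (lt_of_le_of_lt (attain ▸ hle js) (bound_lt i hij)) (lt_irrefl D)

end AuxDegZ


section AuxBlocks

variable {K : Type*} [Field K] {n1 n2 : Type*} [Fintype n1] [Fintype n2]
  [DecidableEq n1] [DecidableEq n2]

lemma pow_fromBlocks (A : Matrix n1 n1 K) (C : Matrix n1 n2 K) (D : Matrix n2 n2 K) (n : ℕ) :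
    ∃ B, (fromBlocks A C 0 D) ^ n = fromBlocks (A ^ n) B 0 (D ^ n) := by
  induction n with
  | zero => exact ⟨0, by simp [Matrix.fromBlocks_one]⟩
  | succ n ih =>
    obtain ⟨B, hB⟩ := ih
    refine ⟨A ^ n * C + B * D, ?_⟩
    rw [pow_succ, pow_succ, pow_succ, hB, Matrix.fromBlocks_multiply]
    simp

lemma aeval_fromBlocks (A : Matrix n1 n1 K) (C : Matrix n1 n2 K) (D : Matrix n2 n2 K)
    (q : Polynomial K) :
    ∃ B, aeval (fromBlocks A C 0 D) q = fromBlocks (aeval A q) B 0 (aeval D q) := by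
  induction q using Polynomial.induction_on' with
  | add p q hp hq =>
    obtain ⟨B1, hB1⟩ := hp
    obtain ⟨B2, hB2⟩ := hq
    exact ⟨B1 + B2, by rw [map_add, map_add, map_add, hB1, hB2, Matrix.fromBlocks_add]; simp⟩
  | monomial n a =>
    obtain ⟨B, hB⟩ := pow_fromBlocks A C D n
    refine ⟨a • B, ?_⟩
    rw [aeval_monomial, aeval_monomial, aeval_monomial, hB]
    ext (i | i) (j | j) <;>
      simp [Matrix.algebraMap_matrix_apply, Matrix.mul_apply, Fintype.sum_sum_type,
        Matrix.fromBlocks, Algebra.algebraMap_self_apply]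

omit [DecidableEq n1] [DecidableEq n2] in
lemma vecMul_fromBlocks_inl (v : n1 ⊕ n2 → K) (A : Matrix n1 n1 K) (B : Matrix n1 n2 K)
    (D : Matrix n2 n2 K) (b : n1) :
    vecMul v (fromBlocks A B 0 D) (Sum.inl b) = vecMul (v ∘ Sum.inl) A b := by
  simp [Matrix.vecMul, dotProduct, Fintype.sum_sum_type, Matrix.fromBlocks]

omit [DecidableEq n1] [DecidableEq n2] in
lemma vecMul_fromBlocks_inr (v : n1 ⊕ n2 → K) (A : Matrix n1 n1 K) (B : Matrix n1 n2 K)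
    (D : Matrix n2 n2 K) (b : n2) :
    vecMul v (fromBlocks A B 0 D) (Sum.inr b) =
      vecMul (v ∘ Sum.inl) B b + vecMul (v ∘ Sum.inr) D b := by
  simp [Matrix.vecMul, dotProduct, Fintype.sum_sum_type, Matrix.fromBlocks]

lemma myVecMul_sum {R : Type*} [CommRing R] {ι n m : Type*} [Fintype ι] [Fintype n]
    (v : n → R) (M : ι → Matrix n m R) :
    vecMul v (∑ i, M i) = ∑ i, vecMul v (M i) := by
  ext j
  simp [Matrix.vecMul, dotProduct, Finset.sum_apply, Matrix.sum_apply, Finset.mul_sum]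
  rw [Finset.sum_comm]

lemma mySum_vecMul {R : Type*} [CommRing R] {ι n m : Type*} [Fintype ι] [Fintype n]
    (v : ι → n → R) (M : Matrix n m R) :
    vecMul (∑ i, v i) M = ∑ i, vecMul (v i) M := by
  ext j
  simp [Matrix.vecMul, dotProduct, Finset.sum_apply, Matrix.sum_apply, Finset.sum_mul]
  rw [Finset.sum_comm]

variable (J1 : Matrix n1 n1 K) (J' : Matrix n1 n2 K) (J2 : Matrix n2 n2 K)

lemma vecMul_aeval_inl (v : n1 ⊕ n2 → K) (q : Polynomial K) (b : n1) :
    vecMul v (aeval (fromBlocks J1 J' 0 J2) q) (Sum.inl b)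
      = vecMul (v ∘ Sum.inl) (aeval J1 q) b := by
  obtain ⟨B, hB⟩ := aeval_fromBlocks J1 J' J2 q
  rw [hB, vecMul_fromBlocks_inl]

lemma vecMul_aeval_inr_of (v : n1 ⊕ n2 → K) (hv : v ∘ Sum.inl = 0) (q : Polynomial K) (b : n2) :
    vecMul v (aeval (fromBlocks J1 J' 0 J2) q) (Sum.inr b)
      = vecMul (v ∘ Sum.inr) (aeval J2 q) b := by
  obtain ⟨B, hB⟩ := aeval_fromBlocks J1 J' J2 q
  rw [hB, vecMul_fromBlocks_inr, hv, Matrix.zero_vecMul]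
  simp

lemma isInterpolant_inl {m : ℕ} (E : Matrix (Fin m) (n1 ⊕ n2) K) (p : Fin m → Polynomial K)
    (h : IsInterpolant E (fromBlocks J1 J' 0 J2) p) :
    IsInterpolant (E.submatrix id Sum.inl) J1 p := by
  funext b
  have h2 := congrFun h (Sum.inl b)
  simp only [Finset.sum_apply, Pi.zero_apply] at h2 ⊢
  rw [← h2]
  refine Finset.sum_congr rfl fun i _ => ?_
  exact (vecMul_aeval_inl J1 J' J2 (E i) (p i) b).symm

lemma comb_interpolant {m : ℕ} (E : Matrix (Fin m) (n1 ⊕ n2) K)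
    (P1 : Matrix (Fin m) (Fin m) (Polynomial K))
    (hrows : ∀ j, IsInterpolant (E.submatrix id Sum.inl) J1 (P1 j))
    (u : Fin m → Polynomial K) :
    IsInterpolant E (fromBlocks J1 J' 0 J2) (fun k => ∑ j, u j * P1 j k) ↔
      IsInterpolant ((polMulMat P1 E (fromBlocks J1 J' 0 J2)).submatrix id Sum.inr) J2 u := by
  set J : Matrix (n1 ⊕ n2) (n1 ⊕ n2) K := fromBlocks J1 J' 0 J2 with hJ
  set F : Matrix (Fin m) (n1 ⊕ n2) K := polMulMat P1 E J with hF
  have hF0 : ∀ j, F j ∘ Sum.inl = 0 := by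
    intro j
    funext b
    have h2 := congrFun (hrows j) b
    simp only [Finset.sum_apply, Pi.zero_apply] at h2 ⊢
    rw [← h2]
    simp only [Function.comp_apply, hF, polMulMat, Finset.sum_apply]
    refine Finset.sum_congr rfl fun k _ => ?_
    exact vecMul_aeval_inl J1 J' J2 (E k) (P1 j k) b
  have hS : (∑ i, vecMul (E i) (aeval J (∑ j, u j * P1 j i)))
      = ∑ j, vecMul (F j) (aeval J (u j)) := by
    calc ∑ i, vecMul (E i) (aeval J (∑ j, u j * P1 j i))
        = ∑ i, ∑ j, vecMul (vecMul (E i) (aeval J (P1 j i))) (aeval J (u j)) := by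
          refine Finset.sum_congr rfl fun i _ => ?_
          rw [map_sum, myVecMul_sum]
          refine Finset.sum_congr rfl fun j _ => ?_
          rw [mul_comm, _root_.map_mul, ← Matrix.vecMul_vecMul]
      _ = ∑ j, ∑ i, vecMul (vecMul (E i) (aeval J (P1 j i))) (aeval J (u j)) :=
          Finset.sum_comm
      _ = ∑ j, vecMul (F j) (aeval J (u j)) := by
          refine Finset.sum_congr rfl fun j _ => ?_
          rw [hF]
          simp only [polMulMat]
          rw [mySum_vecMul]
  constructor
  · intro h
    funext b
    have h' : (∑ i, vecMul (E i) (aeval J (∑ j, u j * P1 j i))) = 0 := h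
    rw [hS] at h'
    have h2 := congrFun h' (Sum.inr b)
    simp only [Finset.sum_apply, Pi.zero_apply] at h2 ⊢
    rw [← h2]
    refine Finset.sum_congr rfl fun j _ => ?_
    exact (vecMul_aeval_inr_of J1 J' J2 (F j) (hF0 j) (u j) b).symm
  · intro h
    show (∑ i, vecMul (E i) (aeval J (∑ j, u j * P1 j i))) = 0
    rw [hS]
    funext c
    rcases c with b | b
    · simp only [Finset.sum_apply, Pi.zero_apply]
      refine Finset.sum_eq_zero fun j _ => ?_
      rw [vecMul_aeval_inl J1 J' J2 (F j) (u j) b, hF0 j, Matrix.zero_vecMul]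
      rfl
    · have h2 := congrFun h b
      simp only [Finset.sum_apply, Pi.zero_apply] at h2 ⊢
      rw [← h2]
      refine Finset.sum_congr rfl fun j _ => ?_
      exact vecMul_aeval_inr_of J1 J' J2 (F j) (hF0 j) (u j) b

end AuxBlocks

section AuxPopov

variable {K : Type*} [Field K]

lemma wb_eq_cancel {a b : WithBot ℤ} {c : ℤ}
    (h : a + (c : WithBot ℤ) = b + (c : WithBot ℤ)) : a = b :=
  le_antisymm (wb_le_cancel h.le) (wb_le_cancel h.ge)

lemma popov_diag {m : ℕ} {s : Fin m → ℤ} {R : Matrix (Fin m) (Fin m) (Polynomial K)}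
    (h : IsPopov s R) {d : Fin m → ℕ} (hd : ∀ j, (R j j).natDegree = d j) (j : Fin m) :
    degZ (R j j) = ((d j : ℤ) : WithBot ℤ) := by
  rw [degZ_eq_natDegree (h.2.2.1 j).ne_zero, hd j]

lemma popov_le {m : ℕ} {s : Fin m → ℤ} {R : Matrix (Fin m) (Fin m) (Polynomial K)}
    (h : IsPopov s R) {d : Fin m → ℕ} (hd : ∀ j, (R j j).natDegree = d j) (j k : Fin m) :
    degZ (R j k) + ((s k : ℤ) : WithBot ℤ)
      ≤ ((d j : ℤ) : WithBot ℤ) + ((s j : ℤ) : WithBot ℤ) := by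
  have piv := (h.2.1 j).1
  rw [popov_diag h hd j] at piv
  rw [piv]
  exact Finset.le_sup (f := fun k => degZ (R j k) + ((s k : ℤ) : WithBot ℤ))
    (Finset.mem_univ k)

lemma popov_lt {m : ℕ} {s : Fin m → ℤ} {R : Matrix (Fin m) (Fin m) (Polynomial K)}
    (h : IsPopov s R) {d : Fin m → ℕ} (hd : ∀ j, (R j j).natDegree = d j) (j k : Fin m)
    (hjk : j < k) :
    degZ (R j k) + ((s k : ℤ) : WithBot ℤ)
      < ((d j : ℤ) : WithBot ℤ) + ((s j : ℤ) : WithBot ℤ) := by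
  refine lt_of_le_of_ne (popov_le h hd j k) fun hEq => ?_
  have piv := h.2.1 j
  refine piv.2 k hjk ?_
  rw [hEq, ← popov_diag h hd j]
  exact piv.1

end AuxPopov

/-- with `P1` an interpolation basis for `(E1, J1)` in `s`-Popov form with
column degree `δ1` and `P2` an interpolation basis for the residual `(E2, J2)` in
`(s+δ1)`-Popov form with column degree `δ2`, any interpolation basis for `(E, J)` in
`s`-Popov form has column degree `δ1 + δ2`. -/
theorem minimal_degree_from_recursive_calls {K : Type*} [Field K] {m σ1 σ2 : ℕ}
    (hm : 1 ≤ m) (h1 : 1 ≤ σ1) (h2 : 1 ≤ σ2)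
    (J1 : Matrix (Fin σ1) (Fin σ1) K) (J' : Matrix (Fin σ1) (Fin σ2) K)
    (J2 : Matrix (Fin σ2) (Fin σ2) K)
    (E : Matrix (Fin m) (Fin σ1 ⊕ Fin σ2) K) (s : Fin m → ℤ)
    (P1 P2 : Matrix (Fin m) (Fin m) (Polynomial K)) (δ1 δ2 : Fin m → ℕ)
    (h1basis : IsInterpolationBasis (E.submatrix id Sum.inl) J1 P1)
    (h1popov : IsPopov s P1) (h1δ : ∀ i, (P1 i i).natDegree = δ1 i)
    (h2basis : IsInterpolationBasis
      ((polMulMat P1 E (Matrix.fromBlocks J1 J' 0 J2)).submatrix id Sum.inr) J2 P2)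
    (h2popov : IsPopov (fun i => s i + (δ1 i : ℤ)) P2)
    (h2δ : ∀ i, (P2 i i).natDegree = δ2 i) :
    ∀ Q : Matrix (Fin m) (Fin m) (Polynomial K),
      IsInterpolationBasis E (Matrix.fromBlocks J1 J' 0 J2) Q → IsPopov s Q →
        ∀ i, (Q i i).natDegree = δ1 i + δ2 i := by
  classical
  intro Q hQbasis hQpopov i
  set Jb : Matrix (Fin σ1 ⊕ Fin σ2) (Fin σ1 ⊕ Fin σ2) K := Matrix.fromBlocks J1 J' 0 J2 with hJb
  set P : Matrix (Fin m) (Fin m) (Polynomial K) := P2 * P1 with hPdef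
  set dQ : Fin m → ℕ := fun j => (Q j j).natDegree with hdQ
  -- degree facts for P1
  have hA1 : ∀ j, degZ (P1 j j) = ((δ1 j : ℤ) : WithBot ℤ) := popov_diag h1popov h1δ
  have hA2 := popov_le h1popov h1δ
  have hA3 := popov_lt h1popov h1δ
  -- degree facts for P2 (shift t j = s j + δ1 j)
  have hB1 : ∀ j, degZ (P2 j j) = ((δ2 j : ℤ) : WithBot ℤ) := popov_diag h2popov h2δ
  have hB2 := popov_le h2popov h2δ
  have hB3 := popov_lt h2popov h2δ
  -- degree facts for Q
  have hQ1 : ∀ j, degZ (Q j j) = ((dQ j : ℤ) : WithBot ℤ) := popov_diag hQpopov (fun _ => rfl)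
  have hQ2 := popov_le hQpopov (fun j => (rfl : (Q j j).natDegree = dQ j))
  have hQ3 := popov_lt hQpopov (fun j => (rfl : (Q j j).natDegree = dQ j))
  -- coercion juggling
  have hco : ∀ i : Fin m, ((δ2 i : ℤ) : WithBot ℤ) + ((s i + (δ1 i : ℤ) : ℤ) : WithBot ℤ)
      = (((δ1 i + δ2 i : ℕ) : ℤ) : WithBot ℤ) + ((s i : ℤ) : WithBot ℤ) := by
    intro i
    rw [← WithBot.coe_add, ← WithBot.coe_add]
    congr 1
    push_cast
    ring
  have hcoj : ∀ j : Fin m, ((δ1 j : ℤ) : WithBot ℤ) + ((s j : ℤ) : WithBot ℤ)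
      = ((s j + (δ1 j : ℤ) : ℤ) : WithBot ℤ) := by
    intro j
    rw [← WithBot.coe_add]
    congr 1
    ring
  -- bounds for the product P = P2 * P1
  have hterm_le : ∀ i j k : Fin m, degZ (P2 i j * P1 j k) + ((s k : ℤ) : WithBot ℤ)
      ≤ (((δ1 i + δ2 i : ℕ) : ℤ) : WithBot ℤ) + ((s i : ℤ) : WithBot ℤ) := by
    intro i j k
    calc degZ (P2 i j * P1 j k) + ((s k : ℤ) : WithBot ℤ)
        = degZ (P2 i j) + (degZ (P1 j k) + ((s k : ℤ) : WithBot ℤ)) := by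
          rw [degZ_mul, add_assoc]
      _ ≤ degZ (P2 i j) + (((δ1 j : ℤ) : WithBot ℤ) + ((s j : ℤ) : WithBot ℤ)) :=
          add_le_add_right (hA2 j k) _
      _ = degZ (P2 i j) + ((s j + (δ1 j : ℤ) : ℤ) : WithBot ℤ) := by rw [hcoj j]
      _ ≤ ((δ2 i : ℤ) : WithBot ℤ) + ((s i + (δ1 i : ℤ) : ℤ) : WithBot ℤ) := hB2 i j
      _ = (((δ1 i + δ2 i : ℕ) : ℤ) : WithBot ℤ) + ((s i : ℤ) : WithBot ℤ) := hco i
  have hDbot : ∀ i : Fin m,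
      (⊥ : WithBot ℤ) < (((δ1 i + δ2 i : ℕ) : ℤ) : WithBot ℤ) + ((s i : ℤ) : WithBot ℤ) := by
    intro i
    rw [← WithBot.coe_add]
    exact WithBot.bot_lt_coe _
  have hterm_lt : ∀ i j k : Fin m, (i < j ∨ j < k) →
      degZ (P2 i j * P1 j k) + ((s k : ℤ) : WithBot ℤ)
      < (((δ1 i + δ2 i : ℕ) : ℤ) : WithBot ℤ) + ((s i : ℤ) : WithBot ℤ) := by
    intro i j k hcase
    rcases hcase with hij | hjk
    · -- strictness via P2
      calc degZ (P2 i j * P1 j k) + ((s k : ℤ) : WithBot ℤ)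
          = degZ (P2 i j) + (degZ (P1 j k) + ((s k : ℤ) : WithBot ℤ)) := by
            rw [degZ_mul, add_assoc]
        _ ≤ degZ (P2 i j) + ((s j + (δ1 j : ℤ) : ℤ) : WithBot ℤ) := by
            rw [← hcoj j]
            exact add_le_add_right (hA2 j k) _
        _ < ((δ2 i : ℤ) : WithBot ℤ) + ((s i + (δ1 i : ℤ) : ℤ) : WithBot ℤ) := hB3 i j hij
        _ = (((δ1 i + δ2 i : ℕ) : ℤ) : WithBot ℤ) + ((s i : ℤ) : WithBot ℤ) := hco i
    · -- strictness via P1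
      rcases eq_or_ne (P2 i j) 0 with h0 | h0
      · rw [h0, zero_mul, degZ_zero, WithBot.bot_add]
        exact hDbot i
      · calc degZ (P2 i j * P1 j k) + ((s k : ℤ) : WithBot ℤ)
            = degZ (P2 i j) + (degZ (P1 j k) + ((s k : ℤ) : WithBot ℤ)) := by
              rw [degZ_mul, add_assoc]
          _ < degZ (P2 i j) + (((δ1 j : ℤ) : WithBot ℤ) + ((s j : ℤ) : WithBot ℤ)) :=
              WithBot.add_lt_add_left
                (by rw [degZ_eq_natDegree h0]; exact WithBot.coe_ne_bot) (hA3 j k hjk)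
          _ = degZ (P2 i j) + ((s j + (δ1 j : ℤ) : ℤ) : WithBot ℤ) := by rw [hcoj j]
          _ ≤ ((δ2 i : ℤ) : WithBot ℤ) + ((s i + (δ1 i : ℤ) : ℤ) : WithBot ℤ) := hB2 i j
          _ = (((δ1 i + δ2 i : ℕ) : ℤ) : WithBot ℤ) + ((s i : ℤ) : WithBot ℤ) := hco i
  have hPapp : ∀ i k : Fin m, P i k = ∑ j, P2 i j * P1 j k := fun i k => Matrix.mul_apply
  have hP2' : ∀ i k : Fin m, degZ (P i k) + ((s k : ℤ) : WithBot ℤ)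
      ≤ (((δ1 i + δ2 i : ℕ) : ℤ) : WithBot ℤ) + ((s i : ℤ) : WithBot ℤ) := by
    intro i k
    rw [hPapp i k]
    exact degZ_sum_le_of _ _ _ _ (fun j _ => hterm_le i j k)
  have hP3' : ∀ i k : Fin m, i < k → degZ (P i k) + ((s k : ℤ) : WithBot ℤ)
      < (((δ1 i + δ2 i : ℕ) : ℤ) : WithBot ℤ) + ((s i : ℤ) : WithBot ℤ) := by
    intro i k hik
    rw [hPapp i k]
    refine degZ_sum_lt_of _ _ _ _ (hDbot i) (fun j _ => ?_)
    rcases lt_or_ge j k with hjk | hjk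
    · exact hterm_lt i j k (Or.inr hjk)
    · exact hterm_lt i j k (Or.inl (lt_of_lt_of_le hik hjk))
  have hP1' : ∀ i : Fin m, degZ (P i i) = (((δ1 i + δ2 i : ℕ) : ℤ) : WithBot ℤ) := by
    intro i
    have hsum : degZ (P i i) + ((s i : ℤ) : WithBot ℤ)
        = (((δ1 i + δ2 i : ℕ) : ℤ) : WithBot ℤ) + ((s i : ℤ) : WithBot ℤ) := by
      rw [hPapp i i]
      refine degZ_sum_eq _ _ _ _ (hDbot i) i (Finset.mem_univ i) ?_ ?_
      · rw [degZ_mul, hB1 i, hA1 i]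
        rw [← hco i, ← hcoj i, ← WithBot.coe_add, ← WithBot.coe_add, ← WithBot.coe_add,
          ← WithBot.coe_add]
        congr 1
        ring
      · intro j _ hjne
        rcases lt_or_gt_of_ne hjne with hjlt | hjgt
        · exact hterm_lt i j i (Or.inr hjlt)
        · exact hterm_lt i j i (Or.inl hjgt)
    exact wb_eq_cancel hsum
  -- membership characterizations
  have hsetQ : ∀ p : Fin m → Polynomial K,
      p ∈ Submodule.span (Polynomial K) (Set.range fun i => Q i) ↔ IsInterpolant E Jb p := by
    intro p
    have := Set.ext_iff.mp hQbasis.2 p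
    simpa using this
  have hset1 : ∀ p : Fin m → Polynomial K,
      p ∈ Submodule.span (Polynomial K) (Set.range fun i => P1 i) ↔
        IsInterpolant (E.submatrix id Sum.inl) J1 p := by
    intro p
    have := Set.ext_iff.mp h1basis.2 p
    simpa using this
  have hset2 : ∀ p : Fin m → Polynomial K,
      p ∈ Submodule.span (Polynomial K) (Set.range fun i => P2 i) ↔
        IsInterpolant ((polMulMat P1 E Jb).submatrix id Sum.inr) J2 p := by
    intro p
    have := Set.ext_iff.mp h2basis.2 p
    simpa using this
  have hrows : ∀ j, IsInterpolant (E.submatrix id Sum.inl) J1 (P1 j) := fun j =>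
    (hset1 (P1 j)).mp (Submodule.subset_span ⟨j, rfl⟩)
  -- Direction 1: natDegree (Q i i) ≤ δ1 i + δ2 i
  have dir1 : (Q i i).natDegree ≤ δ1 i + δ2 i := by
    have hP2i : IsInterpolant ((polMulMat P1 E Jb).submatrix id Sum.inr) J2 (P2 i) :=
      (hset2 (P2 i)).mp (Submodule.subset_span ⟨i, rfl⟩)
    have hProw : IsInterpolant E Jb (P i) := by
      rw [show P i = fun k => ∑ j, P2 i j * P1 j k from funext fun k => hPapp i k]
      exact (comb_interpolant J1 J' J2 E P1 hrows (P2 i)).mpr hP2i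
    have hPmem := (hsetQ (P i)).mpr hProw
    obtain ⟨u, hu⟩ := (Submodule.mem_span_range_iff_exists_fun (Polynomial K)).mp hPmem
    have hp : ∀ k, P i k = ∑ j, u j * Q j k := by
      intro k
      have h' := congrFun hu k
      simp only [Finset.sum_apply, Pi.smul_apply, smul_eq_mul] at h'
      exact h'.symm
    have hpi : P i i ≠ 0 := by
      intro h0
      have hb := hP1' i
      rw [degZ_eq_bot'.mpr h0] at hb
      exact WithBot.bot_ne_coe hb
    have hkey := key_lemma s dQ Q hQ1 hQ2 hQ3 u (P i) hp i hpi
      (fun k => by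
        rw [hP1' i]
        exact hP2' i k)
      (fun k hk => by
        rw [hP1' i]
        exact hP3' i k hk)
    rw [hP1' i] at hkey
    have : ((dQ i : ℤ)) ≤ ((δ1 i + δ2 i : ℕ) : ℤ) := by exact_mod_cast hkey
    exact_mod_cast this
  -- Direction 2: δ1 i + δ2 i ≤ natDegree (Q i i)
  have dir2 : δ1 i + δ2 i ≤ (Q i i).natDegree := by
    have hQint : IsInterpolant E Jb (Q i) :=
      (hsetQ (Q i)).mp (Submodule.subset_span ⟨i, rfl⟩)
    have hQ1int : IsInterpolant (E.submatrix id Sum.inl) J1 (Q i) :=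
      isInterpolant_inl J1 J' J2 E (Q i) hQint
    obtain ⟨v, hv⟩ := (Submodule.mem_span_range_iff_exists_fun (Polynomial K)).mp ((hset1 (Q i)).mpr hQ1int)
    have hQeq : ∀ k, Q i k = ∑ j, v j * P1 j k := by
      intro k
      have h' := congrFun hv k
      simp only [Finset.sum_apply, Pi.smul_apply, smul_eq_mul] at h'
      exact h'.symm
    have hQfun : (fun k => ∑ j, v j * P1 j k) = Q i := by
      funext k
      exact (hQeq k).symm
    have hvint : IsInterpolant ((polMulMat P1 E Jb).submatrix id Sum.inr) J2 v := by
      refine (comb_interpolant J1 J' J2 E P1 hrows v).mp ?_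
      rw [hQfun]
      exact hQint
    obtain ⟨w, hw⟩ := (Submodule.mem_span_range_iff_exists_fun (Polynomial K)).mp ((hset2 v).mpr hvint)
    have hwv : ∀ j, v j = ∑ l, w l * P2 l j := by
      intro j
      have h' := congrFun hw j
      simp only [Finset.sum_apply, Pi.smul_apply, smul_eq_mul] at h'
      exact h'.symm
    have hp2 : ∀ k, Q i k = ∑ l, w l * P l k := by
      intro k
      calc Q i k = ∑ j, (∑ l, w l * P2 l j) * P1 j k := by
            rw [hQeq k]
            exact Finset.sum_congr rfl fun j _ => by rw [← hwv j]
        _ = ∑ j, ∑ l, w l * (P2 l j * P1 j k) := by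
            refine Finset.sum_congr rfl fun j _ => ?_
            rw [Finset.sum_mul]
            exact Finset.sum_congr rfl fun l _ => by ring
        _ = ∑ l, ∑ j, w l * (P2 l j * P1 j k) := Finset.sum_comm
        _ = ∑ l, w l * P l k := by
            refine Finset.sum_congr rfl fun l _ => ?_
            rw [← Finset.mul_sum, ← hPapp l k]
    have hpi : Q i i ≠ 0 := (hQpopov.2.2.1 i).ne_zero
    have hkey := key_lemma s (fun j => δ1 j + δ2 j) P hP1' hP2' hP3' w (Q i) hp2 i hpi
      (fun k => by
        rw [hQ1 i]
        exact hQ2 i k)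
      (fun k hk => by
        rw [hQ1 i]
        exact hQ3 i k hk)
    rw [hQ1 i] at hkey
    have : ((δ1 i + δ2 i : ℕ) : ℤ) ≤ ((dQ i : ℤ)) := by exact_mod_cast hkey
    exact_mod_cast this
  omega
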